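/- For every L-formula φ with n free variables, the projection π₁ : ⟦φ⟧ → X_T, (M, a⃗) ↦ M, is a local homeomorphism with respect to the logical topologies: it is continuous and open, and every point of ⟦φ⟧ has an open neighborhood which π₁ maps homeomorphically onto an open subset of X_T. -/

import Mathlib

open FirstOrder FirstOrder.Language Set Topology

universe u v w x

variable {L : FirstOrder.Language.{u, v}} {α : Type w}

/-- A model of `T` whose carrier is a subset of `α`: an element of the set `X_T` of
small models of `T`. -/
structure SmallModel (L : FirstOrder.Language.{u, v}) (α : Type w) (T : L.Theory) where
  carrier : Set α
  struc : L.Structure carrier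
  models : @FirstOrder.Language.Theory.Model L carrier struc T

/-- `M.Sat φ v` means that the formula `φ` is realized in the small model `M`
at the valuation `v`. -/
def SmallModel.Sat {T : L.Theory} (M : SmallModel L α T) {ι : Type*}
    (φ : L.Formula ι) (v : ι → M.carrier) : Prop :=
  letI := M.struc
  φ.Realize v

/-- The basic open set `⟨φ, b⟩ ⊆ X_T`. -/
def XBasic {T : L.Theory} {n : ℕ} (φ : L.Formula (Fin n)) (b : Fin n → α) :
    Set (SmallModel L α T) :=
  {M | ∃ h : ∀ i, b i ∈ M.carrier, M.Sat φ fun i => ⟨b i, h i⟩}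

/-- The logical topology on `X_T`, generated by the sets `⟨φ, b⟩`. -/
instance SmallModel.instTopologicalSpace {T : L.Theory} :
    TopologicalSpace (SmallModel L α T) :=
  TopologicalSpace.generateFrom
    {U | ∃ (n : ℕ) (φ : L.Formula (Fin n)) (b : Fin n → α), U = XBasic φ b}

/-- A point of the sheaf `⟦φ⟧`: a model `M ∈ X_T` together with a tuple from its carrier
realizing `φ`. -/
structure SheafPt {L : FirstOrder.Language.{u, v}} {α : Type w} (T : L.Theory)
    {n : ℕ} (φ : L.Formula (Fin n)) where
  model : SmallModel L α T
  elem : Fin n → model.carrier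
  sat : model.Sat φ elem

/-- The basic open set `⟨ψ, b⟩ ⊆ ⟦φ⟧`. -/
def sheafBasic {T : L.Theory} {n : ℕ} (φ : L.Formula (Fin n)) {m : ℕ}
    (ψ : L.Formula (Fin n ⊕ Fin m)) (b : Fin m → α) :
    Set (SheafPt (α := α) T φ) :=
  {p | ∃ h : ∀ i, b i ∈ p.model.carrier,
        p.model.Sat ψ (Sum.elim p.elem fun i => ⟨b i, h i⟩)}

/-- The logical topology on `⟦φ⟧`, generated by the sets `⟨ψ, b⟩`. -/
instance SheafPt.instTopologicalSpace {T : L.Theory} {n : ℕ} (φ : L.Formula (Fin n)) :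
    TopologicalSpace (SheafPt (α := α) T φ) :=
  TopologicalSpace.generateFrom
    {U | ∃ (m : ℕ) (ψ : L.Formula (Fin n ⊕ Fin m)) (b : Fin m → α), U = sheafBasic φ ψ b}

section Aux
variable {T : L.Theory} {n : ℕ}

lemma xBasic_isOpen {m : ℕ} (ψ : L.Formula (Fin m)) (b : Fin m → α) :
    IsOpen (XBasic (T := T) ψ b) :=
  TopologicalSpace.isOpen_generateFrom_of_mem ⟨m, ψ, b, rfl⟩

lemma sheafBasic_isOpen (φ : L.Formula (Fin n)) {m : ℕ}
    (ψ : L.Formula (Fin n ⊕ Fin m)) (b : Fin m → α) :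
    IsOpen (sheafBasic (T := T) φ ψ b) :=
  TopologicalSpace.isOpen_generateFrom_of_mem ⟨m, ψ, b, rfl⟩

lemma sheafBasic_univ (φ : L.Formula (Fin n)) :
    (univ : Set (SheafPt (α := α) T φ)) =
      sheafBasic φ (⊤ : L.Formula (Fin n ⊕ Fin 0)) Fin.elim0 := by
  ext p
  letI := p.model.struc
  simp only [mem_univ, sheafBasic, SmallModel.Sat, mem_setOf_eq, true_iff]
  exact ⟨fun i => i.elim0, by simp⟩

lemma sheafBasic_inter (φ : L.Formula (Fin n)) {m m' : ℕ}
    (ψ : L.Formula (Fin n ⊕ Fin m)) (ψ' : L.Formula (Fin n ⊕ Fin m'))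
    (b : Fin m → α) (b' : Fin m' → α) :
    sheafBasic (T := T) φ ψ b ∩ sheafBasic φ ψ' b' =
      sheafBasic φ
        ((ψ.relabel (Sum.map id (Fin.castAdd m'))) ⊓ (ψ'.relabel (Sum.map id (Fin.natAdd m))))
        (Fin.append b b') := by
  ext p
  letI := p.model.struc
  simp only [mem_inter_iff, sheafBasic, SmallModel.Sat, mem_setOf_eq, Formula.realize_inf,
    Formula.realize_relabel]
  constructor
  · rintro ⟨⟨h, hs⟩, ⟨h', hs'⟩⟩
    refine ⟨fun i => Fin.addCases (fun j => by rw [Fin.append_left]; exact h j)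
      (fun j => by rw [Fin.append_right]; exact h' j) i, ?_, ?_⟩
    · convert hs using 1
      funext x
      cases x with
      | inl a => rfl
      | inr j => exact Subtype.ext (Fin.append_left b b' j)
    · convert hs' using 1
      funext x
      cases x with
      | inl a => rfl
      | inr j => exact Subtype.ext (Fin.append_right b b' j)
  · rintro ⟨H, hs, hs'⟩
    refine ⟨⟨fun i => by have := H (Fin.castAdd m' i); rwa [Fin.append_left] at this, ?_⟩,
      ⟨fun i => by have := H (Fin.natAdd m i); rwa [Fin.append_right] at this, ?_⟩⟩
    · convert hs using 1
      funext x
      cases x with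
      | inl a => rfl
      | inr j => exact Subtype.ext (Fin.append_left b b' j).symm
    · convert hs' using 1
      funext x
      cases x with
      | inl a => rfl
      | inr j => exact Subtype.ext (Fin.append_right b b' j).symm

lemma image_sheafBasic (φ : L.Formula (Fin n)) {m : ℕ}
    (ψ : L.Formula (Fin n ⊕ Fin m)) (b : Fin m → α) :
    SheafPt.model '' sheafBasic (T := T) φ ψ b =
      XBasic (((φ.relabel Sum.inl ⊓ ψ).relabel Sum.swap).iExs (Fin n)) b := by
  ext M
  constructor
  · rintro ⟨p, ⟨h, hs⟩, rfl⟩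
    letI := p.model.struc
    refine ⟨h, ?_⟩
    simp only [SmallModel.Sat, Formula.realize_iExs]
    refine ⟨p.elem, ?_⟩
    rw [Formula.realize_relabel, Formula.realize_inf, Formula.realize_relabel]
    have hval : (Sum.elim (fun i => (⟨b i, h i⟩ : p.model.carrier)) p.elem ∘ Sum.swap) =
        Sum.elim p.elem fun i => (⟨b i, h i⟩ : p.model.carrier) := by
      funext x; cases x <;> rfl
    rw [hval]
    exact ⟨p.sat, hs⟩
  · rintro ⟨h, hs⟩
    letI := M.struc
    simp only [SmallModel.Sat, Formula.realize_iExs] at hs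
    obtain ⟨a, ha⟩ := hs
    have hval : (Sum.elim (fun i => (⟨b i, h i⟩ : M.carrier)) a ∘ Sum.swap) =
        Sum.elim a fun i => (⟨b i, h i⟩ : M.carrier) := by
      funext x; cases x <;> rfl
    rw [Formula.realize_relabel, hval, Formula.realize_inf, Formula.realize_relabel] at ha
    exact ⟨⟨M, a, ha.1⟩, ⟨h, ha.2⟩, rfl⟩

lemma preimage_xBasic (φ : L.Formula (Fin n)) {m : ℕ} (ψ : L.Formula (Fin m)) (b : Fin m → α) :
    (SheafPt.model : SheafPt (α := α) T φ → SmallModel L α T) ⁻¹' XBasic ψ b =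
      sheafBasic φ (ψ.relabel Sum.inr) b := by
  ext p
  letI := p.model.struc
  simp only [mem_preimage, XBasic, sheafBasic, SmallModel.Sat, mem_setOf_eq,
    Formula.realize_relabel]
  constructor
  · rintro ⟨h, hs⟩; exact ⟨h, hs⟩
  · rintro ⟨h, hs⟩; exact ⟨h, hs⟩

lemma sInter_sheafBasics (φ : L.Formula (Fin n)) :
    ∀ {S : Set (Set (SheafPt (α := α) T φ))}, S.Finite →
      (∀ s ∈ S, ∃ (m : ℕ) (ψ : L.Formula (Fin n ⊕ Fin m)) (b : Fin m → α),
        s = sheafBasic φ ψ b) →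
      ∃ (m : ℕ) (ψ : L.Formula (Fin n ⊕ Fin m)) (b : Fin m → α), ⋂₀ S = sheafBasic φ ψ b := by
  intro S hfin
  refine Set.Finite.induction_on (motive := fun S _ =>
      (∀ s ∈ S, ∃ (m : ℕ) (ψ : L.Formula (Fin n ⊕ Fin m)) (b : Fin m → α),
        s = sheafBasic φ ψ b) →
      ∃ (m : ℕ) (ψ : L.Formula (Fin n ⊕ Fin m)) (b : Fin m → α), ⋂₀ S = sheafBasic φ ψ b)
    S hfin (fun _ => ⟨0, ⊤, Fin.elim0, by rw [sInter_empty, sheafBasic_univ]⟩) ?_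
  intro a S _ _ ih hsub
  obtain ⟨m, ψ, b, rfl⟩ := hsub a (mem_insert _ _)
  obtain ⟨m', ψ', b', hS⟩ := ih fun s hs => hsub s (mem_insert_of_mem _ hs)
  refine ⟨m + m',
    (ψ.relabel (Sum.map id (Fin.castAdd m'))) ⊓ (ψ'.relabel (Sum.map id (Fin.natAdd m))),
    Fin.append b b', ?_⟩
  rw [sInter_insert, hS]
  exact sheafBasic_inter φ ψ ψ' b b'

lemma pi1_continuous (φ : L.Formula (Fin n)) :
    Continuous (SheafPt.model : SheafPt (α := α) T φ → SmallModel L α T) := by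
  apply continuous_generateFrom_iff.mpr
  rintro s ⟨m, ψ, b, rfl⟩
  rw [preimage_xBasic]
  exact sheafBasic_isOpen φ _ b

lemma pi1_isOpenMap (φ : L.Formula (Fin n)) :
    IsOpenMap (SheafPt.model : SheafPt (α := α) T φ → SmallModel L α T) := by
  have hb := TopologicalSpace.isTopologicalBasis_of_subbasis
    (rfl : SheafPt.instTopologicalSpace (α := α) (T := T) φ = TopologicalSpace.generateFrom _)
  rw [hb.isOpenMap_iff]
  rintro _ ⟨S, ⟨hfin, hsub⟩, rfl⟩
  obtain ⟨m, ψ, b, h⟩ := sInter_sheafBasics φ hfin hsub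
  have h' : (fun f : Set (Set (SheafPt (α := α) T φ)) => ⋂₀ f) S = sheafBasic φ ψ b := h
  rw [h', image_sheafBasic]
  exact xBasic_isOpen _ _

/-- The formula stating that the two blocks of variables are equal. -/
noncomputable def eqFm (L : FirstOrder.Language.{u, v}) (n : ℕ) : L.Formula (Fin n ⊕ Fin n) :=
  BoundedFormula.iInf fun i : Fin n =>
    Term.equal (Term.var (Sum.inl i)) (Term.var (Sum.inr i))

lemma realize_eqFm {M : Type*} [L.Structure M] {v : Fin n ⊕ Fin n → M} :
    (eqFm L n).Realize v ↔ ∀ i, v (Sum.inl i) = v (Sum.inr i) := by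
  rw [eqFm, Formula.Realize, BoundedFormula.realize_iInf]
  simp [Term.equal, Term.realize_relabel, BoundedFormula.realize_bdEqual]

end Aux

/-- **The projection `π₁ : ⟦φ⟧ → X_T` is a local homeomorphism** with respect to the
logical topologies: it is continuous and open, and every point of `⟦φ⟧` has an open
neighborhood mapped homeomorphically onto an open subset of `X_T`. -/
theorem pi1_isLocalHomeomorph {T : L.Theory} {n : ℕ} (φ : L.Formula (Fin n)) :
    Continuous (SheafPt.model : SheafPt (α := α) T φ → SmallModel L α T) ∧
      IsOpenMap (SheafPt.model : SheafPt (α := α) T φ → SmallModel L α T) ∧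
      IsLocalHomeomorph (SheafPt.model : SheafPt (α := α) T φ → SmallModel L α T) := by
  refine ⟨pi1_continuous φ, pi1_isOpenMap φ, ?_⟩
  rw [isLocalHomeomorph_iff_isOpenEmbedding_restrict]
  intro p
  set b : Fin n → α := fun i => (p.elem i : α) with hb
  set U : Set (SheafPt (α := α) T φ) := sheafBasic φ (eqFm L n) b with hU
  have hUopen : IsOpen U := sheafBasic_isOpen φ _ b
  have hmemU : ∀ q : SheafPt (α := α) T φ, q ∈ U →
      ∀ i, (q.elem i : α) = b i := by
    intro q hq i
    obtain ⟨h, hs⟩ := hq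
    letI := q.model.struc
    rw [SmallModel.Sat, realize_eqFm] at hs
    have := hs i
    simpa using congrArg Subtype.val this
  refine ⟨U, hUopen.mem_nhds ?_, ?_⟩
  · refine ⟨fun i => (p.elem i).2, ?_⟩
    letI := p.model.struc
    rw [SmallModel.Sat, realize_eqFm]
    intro i
    exact Subtype.ext rfl
  · apply IsOpenEmbedding.of_continuous_injective_isOpenMap
    · exact (pi1_continuous φ).comp continuous_subtype_val
    · rintro ⟨q, hq⟩ ⟨q', hq'⟩ h
      simp only [Set.restrict_apply] at h
      have hq1 := hmemU q hq
      have hq2 := hmemU q' hq'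
      apply Subtype.ext
      obtain ⟨M, e, s⟩ := q
      obtain ⟨M', e', s'⟩ := q'
      dsimp at h hq1 hq2
      subst h
      have he : e = e' := funext fun i => Subtype.ext ((hq1 i).trans (hq2 i).symm)
      subst he
      rfl
    · intro V hV
      obtain ⟨W, hW, rfl⟩ := isOpen_induced_iff.mp hV
      have himg : U.domRestrict SheafPt.model '' (Subtype.val ⁻¹' W) =
          SheafPt.model '' (U ∩ W) := by
        rw [Set.domRestrict_eq, image_comp, Subtype.image_preimage_coe]
      rw [himg]
      exact pi1_isOpenMap φ _ (hUopen.inter hW)
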